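/- Let σ > 0. (i) For every τ ∈ (0,1) and every y ≠ 0: I_{1/2}(y) ≥ τ/3 + (σ²/y²) ( exp(y²/(2σ²)) − exp(τ² y²/(2σ²)) ). (ii) For every a > 1, every τ ∈ (0, 1/√a) and every y ≠ 0: I_{1/2}(y) ≤ (2/3) exp(τ² y²/(2σ²)) τ + 2 exp(y²/(2aσ²)) (1/√a − τ) + (2√a σ²/y²) ( exp(y²/(2σ²)) − exp(y²/(2aσ²)) ). -/

import Mathlib

open MeasureTheory ProbabilityTheory Real Filter Set

/-- The integral `I_k(y) = ∫₀¹ z^k (τ² + (1−τ²)z)⁻¹ exp(y² z/(2σ²)) dz`. -/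
noncomputable def hsI (σ τ k y : ℝ) : ℝ :=
  ∫ z in (0:ℝ)..1, z ^ k * (τ ^ 2 + (1 - τ ^ 2) * z)⁻¹ * Real.exp (y ^ 2 * z / (2 * σ ^ 2))

/-- The horseshoe estimator `T_τ(y) = y · I_{1/2}(y)/I_{−1/2}(y)`. -/
noncomputable def hsT (σ τ y : ℝ) : ℝ :=
  y * hsI σ τ (1/2) y / hsI σ τ (-(1/2)) y

/-- The horseshoe posterior variance
`V_τ(y) = σ² I_{1/2}/I_{−1/2} + y² (I_{3/2}/I_{−1/2} − (I_{1/2}/I_{−1/2})²)`. -/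
noncomputable def hsV (σ τ y : ℝ) : ℝ :=
  σ ^ 2 * (hsI σ τ (1/2) y / hsI σ τ (-(1/2)) y)
    + y ^ 2 * (hsI σ τ (3/2) y / hsI σ τ (-(1/2)) y
        - (hsI σ τ (1/2) y / hsI σ τ (-(1/2)) y) ^ 2)

/-- The law of `Y` with independent coordinates `Y_i ~ N(θ i, σ²)`. -/
noncomputable def gaussPi (σ : ℝ) {n : ℕ} (θ : Fin n → ℝ) : Measure (Fin n → ℝ) :=
  Measure.pi fun i => gaussianReal (θ i) (Real.toNNReal (σ ^ 2))

/-- `θ` is nearly black: at most `p` nonzero coordinates. -/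
def nearlyBlack {n : ℕ} (θ : Fin n → ℝ) (p : ℕ) : Prop :=
  {i | θ i ≠ 0}.ncard ≤ p

/-- The horseshoe prior density on ℝ. -/
noncomputable def hsPriorDensity (σ τ t : ℝ) : ℝ :=
  ∫ l in Set.Ioi (0:ℝ),
    (2 / (π * (1 + l ^ 2))) * (σ * τ * l * Real.sqrt (2 * π))⁻¹ *
      Real.exp (-(t ^ 2) / (2 * σ ^ 2 * τ ^ 2 * l ^ 2))

/-- The horseshoe posterior mass of a set `A` given data `y`. -/
noncomputable def hsPost (σ τ : ℝ) {n : ℕ} (y : Fin n → ℝ) (A : Set (Fin n → ℝ)) : ℝ :=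
  (∫ θ in A, (∏ i, hsPriorDensity σ τ (θ i)) *
      Real.exp (-(∑ i, (y i - θ i) ^ 2) / (2 * σ ^ 2))) /
  ∫ θ : Fin n → ℝ, (∏ i, hsPriorDensity σ τ (θ i)) *
      Real.exp (-(∑ i, (y i - θ i) ^ 2) / (2 * σ ^ 2))

private lemma hs_exp_int (c a b : ℝ) (hc : c ≠ 0) :
    ∫ z in a..b, Real.exp (c * z) = (Real.exp (c * b) - Real.exp (c * a)) / c := by
  rw [intervalIntegral.integral_comp_mul_left (fun x => Real.exp x) hc]
  simp [integral_exp, smul_eq_mul]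
  ring

private lemma hs_intble (τ c : ℝ) (hτ : 0 < τ) (hτ1 : τ ≤ 1) {u v : ℝ}
    (hu : 0 ≤ u) (hv : v ≤ 1) (huv : u ≤ v) :
    IntervalIntegrable (fun z => z ^ ((1:ℝ)/2) * (τ^2 + (1-τ^2)*z)⁻¹ * Real.exp (c*z))
      MeasureTheory.volume u v := by
  apply ContinuousOn.intervalIntegrable
  have hsub : Set.uIcc u v ⊆ Set.Icc 0 1 := by
    rw [Set.uIcc_of_le huv]; exact Set.Icc_subset_Icc hu hv
  refine ContinuousOn.mono ?_ hsub
  refine ContinuousOn.mul (ContinuousOn.mul ?_ ?_) ?_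
  · exact (Real.continuous_rpow_const (by norm_num)).continuousOn
  · refine ContinuousOn.inv₀ (by fun_prop) ?_
    intro z hz
    have h0 : 0 ≤ (1 - τ^2) * z := mul_nonneg (by nlinarith) hz.1
    have h1 : 0 < τ^2 + (1-τ^2)*z := by nlinarith
    exact h1.ne'
  · fun_prop

private lemma sq_rpow_three_halves {τ : ℝ} (hτ : 0 ≤ τ) : (τ^2 : ℝ) ^ ((1:ℝ)/2+1) = τ^3 := by
  rw [← Real.rpow_natCast τ 2, ← Real.rpow_mul hτ]
  norm_num


private lemma hs_lower (σ : ℝ) (hσ : 0 < σ) (τ : ℝ) (hτ : τ ∈ Set.Ioo (0:ℝ) 1) (y : ℝ) (hy : y ≠ 0) :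
      τ / 3 + σ ^ 2 / y ^ 2 *
          (Real.exp (y ^ 2 / (2 * σ ^ 2)) - Real.exp (τ ^ 2 * y ^ 2 / (2 * σ ^ 2))) ≤
        hsI σ τ (1/2) y := by
  obtain ⟨hτ0, hτ1⟩ := hτ
  set c := y^2/(2*σ^2) with hc
  have hc0 : 0 < c := by positivity
  set f : ℝ → ℝ := fun z => z ^ ((1:ℝ)/2) * (τ^2 + (1-τ^2)*z)⁻¹ * Real.exp (c*z) with hf
  have hEq : hsI σ τ (1/2) y = ∫ z in (0:ℝ)..1, f z := by
    unfold hsI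
    apply intervalIntegral.integral_congr
    intro z _
    have h : y^2*z/(2*σ^2) = c*z := by rw [hc]; ring
    beta_reduce
    rw [h, hf]
  have hτ2 : (0:ℝ) < τ^2 := by positivity
  have hτ21 : τ^2 ≤ 1 := by nlinarith
  have hi1 : IntervalIntegrable f volume 0 (τ^2) :=
    hs_intble τ c hτ0 hτ1.le le_rfl hτ21 hτ2.le
  have hi2 : IntervalIntegrable f volume (τ^2) 1 :=
    hs_intble τ c hτ0 hτ1.le hτ2.le le_rfl hτ21
  have hsplit : ∫ z in (0:ℝ)..1, f z = (∫ z in (0:ℝ)..τ^2, f z) + ∫ z in (τ^2:ℝ)..1, f z :=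
    (intervalIntegral.integral_add_adjacent_intervals hi1 hi2).symm
  -- piece 1
  have h1 : τ/3 ≤ ∫ z in (0:ℝ)..τ^2, f z := by
    have hmono : ∫ z in (0:ℝ)..τ^2, z ^ ((1:ℝ)/2) * (2*τ^2)⁻¹ ≤ ∫ z in (0:ℝ)..τ^2, f z := by
      apply intervalIntegral.integral_mono_on hτ2.le _ hi1
      · intro z hz
        obtain ⟨hz0, hz1⟩ := hz
        have hD : 0 < τ^2 + (1-τ^2)*z := by nlinarith [mul_nonneg (show (0:ℝ) ≤ 1-τ^2 by nlinarith) hz0]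
        have hstep : z ^ ((1:ℝ)/2) * (2*τ^2)⁻¹ ≤ z ^ ((1:ℝ)/2) * (τ^2 + (1-τ^2)*z)⁻¹ := by
          gcongr
          nlinarith [mul_nonneg (sq_nonneg τ) hz0]
        calc z ^ ((1:ℝ)/2) * (2*τ^2)⁻¹ ≤ z ^ ((1:ℝ)/2) * (τ^2 + (1-τ^2)*z)⁻¹ := hstep
          _ ≤ f z := by
              rw [hf]
              exact le_mul_of_one_le_right
                (mul_nonneg (Real.rpow_nonneg hz0 _) (inv_nonneg.2 hD.le))
                (Real.one_le_exp (by positivity))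
      · exact (((Real.continuous_rpow_const (by norm_num)).mul continuous_const)).intervalIntegrable _ _
    have hcomp : ∫ z in (0:ℝ)..τ^2, z ^ ((1:ℝ)/2) * (2*τ^2)⁻¹ = τ/3 := by
      rw [intervalIntegral.integral_mul_const, integral_rpow (Or.inl (by norm_num))]
      rw [Real.zero_rpow (by norm_num), sq_rpow_three_halves hτ0.le]
      field_simp
      ring
    linarith
  -- piece 2
  have h2 : σ ^ 2 / y ^ 2 *
      (Real.exp (y ^ 2 / (2 * σ ^ 2)) - Real.exp (τ ^ 2 * y ^ 2 / (2 * σ ^ 2))) ≤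
      ∫ z in (τ^2:ℝ)..1, f z := by
    have hmono : ∫ z in (τ^2:ℝ)..1, (2:ℝ)⁻¹ * Real.exp (c*z) ≤ ∫ z in (τ^2:ℝ)..1, f z := by
      apply intervalIntegral.integral_mono_on hτ21 _ hi2
      · intro z hz
        obtain ⟨hz0, hz1⟩ := hz
        have hzpos : 0 < z := lt_of_lt_of_le hτ2 hz0
        set s := Real.sqrt z with hs
        have hss : s * s = z := Real.mul_self_sqrt hzpos.le
        have hspos : 0 < s := Real.sqrt_pos.2 hzpos
        have hs1 : s ≤ 1 := Real.sqrt_le_one.mpr hz1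
        have hD : 0 < τ^2 + (1-τ^2)*z := by nlinarith [mul_nonneg (show (0:ℝ) ≤ 1-τ^2 by nlinarith) hzpos.le]
        have hD2 : τ^2 + (1-τ^2)*z ≤ 2*s*s := by
          nlinarith [mul_nonneg (sq_nonneg τ) hzpos.le]
        have key : (2:ℝ)⁻¹ ≤ s * (τ^2 + (1-τ^2)*z)⁻¹ := by
          rw [← div_eq_mul_inv, le_div_iff₀ hD]
          nlinarith
        have : (2:ℝ)⁻¹ * Real.exp (c*z) ≤ (s * (τ^2 + (1-τ^2)*z)⁻¹) * Real.exp (c*z) :=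
          mul_le_mul_of_nonneg_right key (Real.exp_pos _).le
        rw [hf]
        simpa [hs, Real.sqrt_eq_rpow, mul_assoc] using this
      · exact (continuous_const.mul (by fun_prop)).intervalIntegrable _ _
    have hcomp : ∫ z in (τ^2:ℝ)..1, (2:ℝ)⁻¹ * Real.exp (c*z)
        = σ ^ 2 / y ^ 2 * (Real.exp (y ^ 2 / (2 * σ ^ 2)) - Real.exp (τ ^ 2 * y ^ 2 / (2 * σ ^ 2))) := by
      rw [intervalIntegral.integral_const_mul, hs_exp_int c _ _ hc0.ne']
      rw [show c * 1 = y^2/(2*σ^2) by rw [hc]; ring,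
          show c * τ^2 = τ^2*y^2/(2*σ^2) by rw [hc]; ring]
      rw [hc]
      field_simp
    linarith
  rw [hEq, hsplit]
  linarith

set_option maxHeartbeats 1000000 in
private lemma hs_upper (σ : ℝ) (hσ : 0 < σ) (a : ℝ) (ha : 1 < a) (τ : ℝ) (hτ0 : 0 < τ)
    (hτa : τ < 1 / Real.sqrt a) (y : ℝ) (hy : y ≠ 0) :
      hsI σ τ (1/2) y ≤
        2 / 3 * Real.exp (τ ^ 2 * y ^ 2 / (2 * σ ^ 2)) * τ +
          2 * Real.exp (y ^ 2 / (2 * a * σ ^ 2)) * (1 / Real.sqrt a - τ) +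
          2 * Real.sqrt a * σ ^ 2 / y ^ 2 *
            (Real.exp (y ^ 2 / (2 * σ ^ 2)) - Real.exp (y ^ 2 / (2 * a * σ ^ 2))) := by
  have ha0 : (0:ℝ) < a := by linarith
  set sa := Real.sqrt a with hsa
  have hsa0 : 0 < sa := Real.sqrt_pos.2 ha0
  have hsasq : sa^2 = a := Real.sq_sqrt ha0.le
  have hsa1 : 1 < sa := by nlinarith
  have hτ1 : τ < 1 := by
    have : 1/sa < 1 := by rw [div_lt_one hsa0]; exact hsa1
    linarith
  have hτ2 : (0:ℝ) < τ^2 := by positivity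
  have hτ2a : τ^2 < 1/a := by
    have h1 : τ^2 < (1/sa)^2 := by nlinarith
    have h2 : ((1:ℝ)/sa)^2 = 1/a := by rw [div_pow, one_pow, hsasq]
    linarith [h2 ▸ h1]
  have h1a0 : (0:ℝ) < 1/a := by positivity
  have h1a1 : (1:ℝ)/a < 1 := by rw [div_lt_one ha0]; exact ha
  set c := y^2/(2*σ^2) with hc
  have hc0 : 0 < c := by positivity
  set f : ℝ → ℝ := fun z => z ^ ((1:ℝ)/2) * (τ^2 + (1-τ^2)*z)⁻¹ * Real.exp (c*z) with hf
  have hEq : hsI σ τ (1/2) y = ∫ z in (0:ℝ)..1, f z := by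
    unfold hsI
    apply intervalIntegral.integral_congr
    intro z _
    have h : y^2*z/(2*σ^2) = c*z := by rw [hc]; ring
    beta_reduce
    rw [h, hf]
  have hi1 : IntervalIntegrable f volume 0 (τ^2) :=
    hs_intble τ c hτ0 hτ1.le le_rfl (by linarith) hτ2.le
  have hi2 : IntervalIntegrable f volume (τ^2) (1/a) :=
    hs_intble τ c hτ0 hτ1.le hτ2.le h1a1.le hτ2a.le
  have hi3 : IntervalIntegrable f volume (1/a) 1 :=
    hs_intble τ c hτ0 hτ1.le h1a0.le le_rfl h1a1.le
  have hsplit : ∫ z in (0:ℝ)..1, f z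
      = (∫ z in (0:ℝ)..τ^2, f z) + ((∫ z in (τ^2:ℝ)..(1/a), f z) + ∫ z in ((1:ℝ)/a)..1, f z) := by
    rw [intervalIntegral.integral_add_adjacent_intervals hi2 hi3,
        intervalIntegral.integral_add_adjacent_intervals hi1 (hi2.trans hi3)]
  -- piece 1
  have u1 : ∫ z in (0:ℝ)..τ^2, f z ≤ 2 / 3 * Real.exp (τ ^ 2 * y ^ 2 / (2 * σ ^ 2)) * τ := by
    have hmono : ∫ z in (0:ℝ)..τ^2, f z
        ≤ ∫ z in (0:ℝ)..τ^2, z ^ ((1:ℝ)/2) * ((τ^2)⁻¹ * Real.exp (c*τ^2)) := by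
      apply intervalIntegral.integral_mono_on hτ2.le hi1
      · exact (((Real.continuous_rpow_const (by norm_num)).mul continuous_const)).intervalIntegrable _ _
      · intro z hz
        obtain ⟨hz0, hz1⟩ := hz
        have hx : 0 ≤ z ^ ((1:ℝ)/2) := Real.rpow_nonneg hz0 _
        have hDτ : τ^2 ≤ τ^2 + (1-τ^2)*z :=
          le_add_of_nonneg_right (mul_nonneg (by nlinarith) hz0)
        rw [hf]
        beta_reduce
        rw [mul_assoc]
        gcongr
    have hcomp : ∫ z in (0:ℝ)..τ^2, z ^ ((1:ℝ)/2) * ((τ^2)⁻¹ * Real.exp (c*τ^2))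
        = 2 / 3 * Real.exp (τ ^ 2 * y ^ 2 / (2 * σ ^ 2)) * τ := by
      rw [intervalIntegral.integral_mul_const, integral_rpow (Or.inl (by norm_num)),
          Real.zero_rpow (by norm_num), sq_rpow_three_halves hτ0.le,
          show c * τ^2 = τ^2*y^2/(2*σ^2) by rw [hc]; ring]
      field_simp
      ring
    linarith
  -- piece 2
  have u2 : ∫ z in (τ^2:ℝ)..(1/a), f z
      ≤ 2 * Real.exp (y ^ 2 / (2 * a * σ ^ 2)) * (1 / sa - τ) := by
    have hmono : ∫ z in (τ^2:ℝ)..(1/a), f z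
        ≤ ∫ z in (τ^2:ℝ)..(1/a), z ^ (-((1:ℝ)/2)) * Real.exp (c*(1/a)) := by
      apply intervalIntegral.integral_mono_on hτ2a.le hi2
      · apply ContinuousOn.intervalIntegrable
        apply ContinuousOn.mul _ continuousOn_const
        intro z hz
        have hz0 : 0 < z := by
          rcases Set.mem_uIcc.1 hz with h | h
          · linarith [h.1]
          · linarith [h.1]
        exact (Real.continuousAt_rpow_const z _ (Or.inl hz0.ne')).continuousWithinAt
      · intro z hz
        obtain ⟨hz0, hz1⟩ := hz
        have hzpos : 0 < z := lt_of_lt_of_le hτ2 hz0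
        have hz1' : z ≤ 1 := by linarith
        set s := Real.sqrt z with hs
        have hss : s * s = z := Real.mul_self_sqrt hzpos.le
        have hspos : 0 < s := Real.sqrt_pos.2 hzpos
        have hDz : z ≤ τ^2 + (1-τ^2)*z := by nlinarith [mul_nonneg (sq_nonneg τ) (by linarith : (0:ℝ) ≤ 1 - z)]
        have hzp : z ^ ((1:ℝ)/2) = s := (Real.sqrt_eq_rpow z).symm
        have hzm : z ^ (-((1:ℝ)/2)) = s⁻¹ := by
          rw [Real.rpow_neg hzpos.le, ← Real.sqrt_eq_rpow]
        rw [hf]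
        beta_reduce
        rw [hzp, hzm]
        have h1 : s * (τ^2 + (1-τ^2)*z)⁻¹ ≤ s * z⁻¹ := by gcongr
        have h2 : s * z⁻¹ = s⁻¹ := by
          rw [← hss, mul_inv, ← mul_assoc, mul_inv_cancel₀ hspos.ne', one_mul]
        have h3 : Real.exp (c*z) ≤ Real.exp (c*(1/a)) :=
          Real.exp_le_exp.mpr (mul_le_mul_of_nonneg_left hz1 hc0.le)
        calc s * (τ^2 + (1-τ^2)*z)⁻¹ * Real.exp (c*z)
            ≤ (s * z⁻¹) * Real.exp (c*(1/a)) :=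
              mul_le_mul h1 h3 (Real.exp_pos _).le (by positivity)
          _ = s⁻¹ * Real.exp (c*(1/a)) := by rw [h2]
    have hcomp : ∫ z in (τ^2:ℝ)..(1/a), z ^ (-((1:ℝ)/2)) * Real.exp (c*(1/a))
        = 2 * Real.exp (y ^ 2 / (2 * a * σ ^ 2)) * (1 / sa - τ) := by
      rw [intervalIntegral.integral_mul_const, integral_rpow (Or.inl (by norm_num)),
          show (-((1:ℝ)/2) + 1) = 1/2 by norm_num,
          show ((1:ℝ)/a) ^ ((1:ℝ)/2) = 1/sa by
            rw [← Real.sqrt_eq_rpow, one_div, Real.sqrt_inv, hsa, one_div],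
          show ((τ:ℝ)^2) ^ ((1:ℝ)/2) = τ by rw [← Real.sqrt_eq_rpow, Real.sqrt_sq hτ0.le],
          show c * (1/a) = y^2/(2*a*σ^2) by rw [hc]; field_simp]
      ring
    linarith
  -- piece 3
  have u3 : ∫ z in ((1:ℝ)/a)..1, f z
      ≤ 2 * sa * σ ^ 2 / y ^ 2 *
          (Real.exp (y ^ 2 / (2 * σ ^ 2)) - Real.exp (y ^ 2 / (2 * a * σ ^ 2))) := by
    have hmono : ∫ z in ((1:ℝ)/a)..1, f z ≤ ∫ z in ((1:ℝ)/a)..1, sa * Real.exp (c*z) := by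
      apply intervalIntegral.integral_mono_on h1a1.le hi3
      · exact (continuous_const.mul (by fun_prop)).intervalIntegrable _ _
      · intro z hz
        obtain ⟨hz0, hz1⟩ := hz
        have hzpos : 0 < z := lt_of_lt_of_le h1a0 hz0
        set s := Real.sqrt z with hs
        have hss : s * s = z := Real.mul_self_sqrt hzpos.le
        have hspos : 0 < s := Real.sqrt_pos.2 hzpos
        have hDz : z ≤ τ^2 + (1-τ^2)*z := by nlinarith [mul_nonneg (sq_nonneg τ) (by linarith : (0:ℝ) ≤ 1 - z)]
        have hzp : z ^ ((1:ℝ)/2) = s := (Real.sqrt_eq_rpow z).symm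
        have hsges : sa⁻¹ ≤ s := by
          have h := Real.sqrt_le_sqrt hz0
          rwa [one_div, Real.sqrt_inv, ← hsa, ← hs] at h
        have h1 : s * (τ^2 + (1-τ^2)*z)⁻¹ ≤ s * z⁻¹ := by gcongr
        have h2 : s * z⁻¹ = s⁻¹ := by
          rw [← hss, mul_inv, ← mul_assoc, mul_inv_cancel₀ hspos.ne', one_mul]
        have h3 : s⁻¹ ≤ sa := by
          rw [inv_le_comm₀ hspos hsa0]
          exact hsges
        have h4 : s * (τ^2 + (1-τ^2)*z)⁻¹ ≤ sa := le_trans (le_of_le_of_eq h1 h2) h3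
        have h5 : s * (τ^2 + (1-τ^2)*z)⁻¹ * Real.exp (c*z) ≤ sa * Real.exp (c*z) :=
          mul_le_mul_of_nonneg_right h4 (Real.exp_pos _).le
        rw [hf]
        beta_reduce
        rw [hzp]
        exact h5
    have hcomp : ∫ z in ((1:ℝ)/a)..1, sa * Real.exp (c*z)
        = 2 * sa * σ ^ 2 / y ^ 2 *
          (Real.exp (y ^ 2 / (2 * σ ^ 2)) - Real.exp (y ^ 2 / (2 * a * σ ^ 2))) := by
      have hc1 : c * 1 = y^2/(2*σ^2) := by rw [hc]; ring
      have hca : c * (1/a) = y^2/(2*a*σ^2) := by rw [hc]; field_simp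
      have hfrac : sa / c = 2 * sa * σ ^ 2 / y ^ 2 := by
        rw [hc]; field_simp
      rw [intervalIntegral.integral_const_mul, hs_exp_int c _ _ hc0.ne', hc1, hca, ← hfrac]
      ring
    linarith
  rw [hEq, hsplit]
  have hce : Real.exp (y^2/(2*σ^2)) = Real.exp c := by rw [hc]
  linarith


/-- Lemma A.1, bounds (A.2) and (A.3): lower and upper bounds on `I_{1/2}`. -/
theorem hsI_one_half_bounds (σ : ℝ) (hσ : 0 < σ) :
    (∀ τ : ℝ, τ ∈ Set.Ioo (0:ℝ) 1 → ∀ y : ℝ, y ≠ 0 →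
      τ / 3 + σ ^ 2 / y ^ 2 *
          (Real.exp (y ^ 2 / (2 * σ ^ 2)) - Real.exp (τ ^ 2 * y ^ 2 / (2 * σ ^ 2))) ≤
        hsI σ τ (1/2) y) ∧
    (∀ a : ℝ, 1 < a → ∀ τ : ℝ, 0 < τ → τ < 1 / Real.sqrt a → ∀ y : ℝ, y ≠ 0 →
      hsI σ τ (1/2) y ≤
        2 / 3 * Real.exp (τ ^ 2 * y ^ 2 / (2 * σ ^ 2)) * τ +
          2 * Real.exp (y ^ 2 / (2 * a * σ ^ 2)) * (1 / Real.sqrt a - τ) +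
          2 * Real.sqrt a * σ ^ 2 / y ^ 2 *
            (Real.exp (y ^ 2 / (2 * σ ^ 2)) - Real.exp (y ^ 2 / (2 * a * σ ^ 2)))) :=
  ⟨fun τ hτ y hy => hs_lower σ hσ τ hτ y hy, fun a ha τ hτ0 hτa y hy => hs_upper σ hσ a ha τ hτ0 hτa y hy⟩
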